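/- Fix N ≥ 1, σ₁ ≠ 0, σ₂ ∈ ℝ, and let F₁, F₂ ∈ ℝ^{N×N} be strictly lower triangular, g₁, g₂ ∈ ℝ^N with g₁ ≠ 0, and b, b' ∈ ℝ. Suppose P₁(g₁,F₁,g₂,F₂) ≤ b, P₂(g₁,F₁,g₂,F₂) ≤ b, and b' > b. Then there exists c > 1 such that P₁(c·g₁, F₁, g₂, F₂) ≤ b', P₂(c·g₁, F₁, g₂, F₂) ≤ b', and (c·g₁)ᵀQ₁⁻¹(c·g₁) > g₁ᵀQ₁⁻¹g₁. In words: strictly enlarging the power budget allows a feasible encoding with strictly larger SNR₁ while keeping everything else fixed, so the minimum sum-error is decreasing in the power budget. -/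

import Mathlib

open Matrix

noncomputable section

/-- A matrix is strictly lower triangular: `A i j = 0` whenever `i ≤ j`. -/
def Slt {N : ℕ} (A : Matrix (Fin N) (Fin N) ℝ) : Prop :=
  ∀ i j : Fin N, i ≤ j → A i j = 0

/-- Squared Frobenius norm `‖A‖_F² = trace (Aᵀ A)`. -/
def frobSq {N : ℕ} (A : Matrix (Fin N) (Fin N) ℝ) : ℝ := Matrix.trace (Aᵀ * A)

/-- `Q₁ = σ₁²(I + F₁F₂)(I + F₁F₂)ᵀ + σ₂²F₁F₁ᵀ`. -/
def Q1 {N : ℕ} (σ₁ σ₂ : ℝ) (F₁ F₂ : Matrix (Fin N) (Fin N) ℝ) :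
    Matrix (Fin N) (Fin N) ℝ :=
  σ₁ ^ 2 • ((1 + F₁ * F₂) * (1 + F₁ * F₂)ᵀ) + σ₂ ^ 2 • (F₁ * F₁ᵀ)

/-- Transmit power of User 1. -/
def P1 {N : ℕ} (σ₁ σ₂ : ℝ) (g₁ : Fin N → ℝ) (F₁ : Matrix (Fin N) (Fin N) ℝ)
    (g₂ : Fin N → ℝ) (F₂ : Matrix (Fin N) (Fin N) ℝ) : ℝ :=
  g₁ ⬝ᵥ g₁ + (F₁.mulVec g₂) ⬝ᵥ (F₁.mulVec g₂)
    + σ₁ ^ 2 * frobSq (F₁ * F₂) + σ₂ ^ 2 * frobSq F₁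

/-- Transmit power of User 2. -/
def P2 {N : ℕ} (σ₁ σ₂ : ℝ) (g₁ : Fin N → ℝ) (F₁ : Matrix (Fin N) (Fin N) ℝ)
    (g₂ : Fin N → ℝ) (F₂ : Matrix (Fin N) (Fin N) ℝ) : ℝ :=
  ((1 + F₂ * F₁).mulVec g₂) ⬝ᵥ ((1 + F₂ * F₁).mulVec g₂)
    + (F₂.mulVec g₁) ⬝ᵥ (F₂.mulVec g₁)
    + σ₁ ^ 2 * frobSq (F₂ * (1 + F₁ * F₂)) + σ₂ ^ 2 * frobSq (F₂ * F₁)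

/-- The determinant of `1 + F₁F₂` is `1` when `F₁, F₂` are strictly lower triangular. -/
lemma det_one_add_slt_mul {N : ℕ} (F₁ F₂ : Matrix (Fin N) (Fin N) ℝ)
    (hF₁ : Slt F₁) (hF₂ : Slt F₂) : (1 + F₁ * F₂).det = 1 := by
  have hzero : ∀ i j : Fin N, i ≤ j → (F₁ * F₂) i j = 0 := by
    intro i j hij
    rw [Matrix.mul_apply]
    refine Finset.sum_eq_zero fun k _ => ?_
    by_cases h : i ≤ k
    · rw [hF₁ i k h, zero_mul]
    · rw [hF₂ k j (le_of_lt (lt_of_lt_of_le (lt_of_not_ge h) hij)), mul_zero]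
  have h : (1 + F₁ * F₂).BlockTriangular OrderDual.toDual := by
    intro i j hij
    simp only [OrderDual.toDual_lt_toDual] at hij
    simp [hzero i j (le_of_lt hij), Matrix.one_apply_ne (ne_of_gt hij).symm]
  rw [Matrix.det_of_lowerTriangular _ h]
  have hd : ∀ i : Fin N, (1 + F₁ * F₂) i i = 1 := by
    intro i; simp [hzero i i le_rfl]
  simp [hd]

/-- `Q₁` is positive definite. -/
lemma q1_posDef {N : ℕ} (σ₁ σ₂ : ℝ) (hσ₁ : σ₁ ≠ 0)
    (F₁ F₂ : Matrix (Fin N) (Fin N) ℝ) (hF₁ : Slt F₁) (hF₂ : Slt F₂) :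
    (Q1 σ₁ σ₂ F₁ F₂).PosDef := by
  set L := 1 + F₁ * F₂ with hLdef
  have hdet : L.det = 1 := det_one_add_slt_mul F₁ F₂ hF₁ hF₂
  rw [Matrix.posDef_iff_dotProduct_mulVec]
  constructor
  · show _ = _
    simp only [Q1, ← Matrix.conjTranspose_eq_transpose_of_trivial]
    simp [Matrix.conjTranspose_add, Matrix.conjTranspose_smul, Matrix.conjTranspose_mul]
  · intro x hx
    have key : ∀ A : Matrix (Fin N) (Fin N) ℝ, x ⬝ᵥ (A * Aᵀ) *ᵥ x = (Aᵀ *ᵥ x) ⬝ᵥ (Aᵀ *ᵥ x) := by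
      intro A
      rw [← Matrix.mulVec_mulVec, Matrix.dotProduct_mulVec, ← Matrix.mulVec_transpose]
    have hL : Lᵀ *ᵥ x ≠ 0 := by
      have hinj : Function.Injective (Lᵀ.mulVec) := by
        rw [Matrix.mulVec_injective_iff_isUnit]
        simp [Matrix.isUnit_iff_isUnit_det, Matrix.det_transpose, hdet]
      intro h
      exact hx (hinj (by simp [h]))
    have h1 : 0 < (Lᵀ *ᵥ x) ⬝ᵥ (Lᵀ *ᵥ x) := by
      rcases Function.ne_iff.mp hL with ⟨i, hi⟩
      have hi' : (Lᵀ *ᵥ x) i ≠ 0 := by simpa using hi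
      refine Finset.sum_pos' (fun j _ => mul_self_nonneg _) ⟨i, Finset.mem_univ i, ?_⟩
      rcases lt_or_gt_of_ne hi' with h | h
      · exact mul_pos_of_neg_of_neg h h
      · exact mul_pos h h
    have h2 : 0 ≤ (F₁ᵀ *ᵥ x) ⬝ᵥ (F₁ᵀ *ᵥ x) :=
      Finset.sum_nonneg fun j _ => mul_self_nonneg _
    have hstar : star x = x := by simp
    show 0 < star x ⬝ᵥ (Q1 σ₁ σ₂ F₁ F₂) *ᵥ x
    simp only [Q1, ← hLdef, hstar, Matrix.add_mulVec, Matrix.smul_mulVec, dotProduct_add,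
      dotProduct_smul, smul_eq_mul, key]
    have hσ : 0 < σ₁ ^ 2 := by positivity
    nlinarith [sq_nonneg σ₂, mul_nonneg (sq_nonneg σ₂) h2]

/-- Strictly enlarging the power budget allows a feasible
encoding with strictly larger `SNR₁`, scaling only `g₁` by some `c > 1`. -/
theorem larger_budget_strictly_larger_snr {N : ℕ} (hN : 1 ≤ N)
    (σ₁ σ₂ : ℝ) (hσ₁ : σ₁ ≠ 0)
    (F₁ F₂ : Matrix (Fin N) (Fin N) ℝ) (hF₁ : Slt F₁) (hF₂ : Slt F₂)
    (g₁ g₂ : Fin N → ℝ) (hg₁ : g₁ ≠ 0) (b b' : ℝ)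
    (hP1 : P1 σ₁ σ₂ g₁ F₁ g₂ F₂ ≤ b) (hP2 : P2 σ₁ σ₂ g₁ F₁ g₂ F₂ ≤ b)
    (hb : b < b') :
    ∃ c : ℝ, 1 < c
      ∧ P1 σ₁ σ₂ (c • g₁) F₁ g₂ F₂ ≤ b'
      ∧ P2 σ₁ σ₂ (c • g₁) F₁ g₂ F₂ ≤ b'
      ∧ g₁ ⬝ᵥ (Q1 σ₁ σ₂ F₁ F₂)⁻¹.mulVec g₁
          < (c • g₁) ⬝ᵥ (Q1 σ₁ σ₂ F₁ F₂)⁻¹.mulVec (c • g₁) := by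
  have hQ : (Q1 σ₁ σ₂ F₁ F₂).PosDef := q1_posDef σ₁ σ₂ hσ₁ F₁ F₂ hF₁ hF₂
  have hQi : (Q1 σ₁ σ₂ F₁ F₂)⁻¹.PosDef := hQ.inv
  have hbase : 0 < g₁ ⬝ᵥ (Q1 σ₁ σ₂ F₁ F₂)⁻¹.mulVec g₁ := by
    have := hQi.dotProduct_mulVec_pos hg₁
    simpa using this
  set t1 : ℝ := g₁ ⬝ᵥ g₁ with ht1def
  set t2 : ℝ := (F₂.mulVec g₁) ⬝ᵥ (F₂.mulVec g₁) with ht2def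
  have ht1 : 0 ≤ t1 := Finset.sum_nonneg fun j _ => mul_self_nonneg _
  have ht2 : 0 ≤ t2 := Finset.sum_nonneg fun j _ => mul_self_nonneg _
  have hden : (0:ℝ) < t1 + t2 + 1 := by linarith
  set ε : ℝ := (b' - b) / (t1 + t2 + 1) with hεdef
  have hε : 0 < ε := div_pos (by linarith) hden
  refine ⟨Real.sqrt (1 + ε), ?_, ?_, ?_, ?_⟩
  case refine_1 =>
    have : Real.sqrt 1 < Real.sqrt (1 + ε) :=
      Real.sqrt_lt_sqrt (by norm_num) (by linarith)
    simpa using this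
  all_goals {
    have hc2 : Real.sqrt (1 + ε) ^ 2 = 1 + ε := Real.sq_sqrt (by linarith)
    have hεle : ε * (t1 + t2 + 1) = b' - b := div_mul_cancel₀ _ (ne_of_gt hden)
    first
    | -- P1 bound
      ( show P1 σ₁ σ₂ (Real.sqrt (1 + ε) • g₁) F₁ g₂ F₂ ≤ b'
        have heq : P1 σ₁ σ₂ (Real.sqrt (1 + ε) • g₁) F₁ g₂ F₂
            = P1 σ₁ σ₂ g₁ F₁ g₂ F₂ + ε * t1 := by
          simp only [P1, smul_dotProduct, dotProduct_smul, smul_eq_mul, ← ht1def]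
          nlinarith [hc2]
        rw [heq]; nlinarith [mul_nonneg (le_of_lt hε) (add_nonneg ht2 zero_le_one)] )
    | -- P2 bound
      ( show P2 σ₁ σ₂ (Real.sqrt (1 + ε) • g₁) F₁ g₂ F₂ ≤ b'
        have heq : P2 σ₁ σ₂ (Real.sqrt (1 + ε) • g₁) F₁ g₂ F₂
            = P2 σ₁ σ₂ g₁ F₁ g₂ F₂ + ε * t2 := by
          simp only [P2, Matrix.mulVec_smul, smul_dotProduct, dotProduct_smul,
            smul_eq_mul, ← ht2def]
          nlinarith [hc2]
        rw [heq]; nlinarith [mul_nonneg (le_of_lt hε) (add_nonneg ht1 zero_le_one)] )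
    | -- SNR
      ( have heq : (Real.sqrt (1 + ε) • g₁) ⬝ᵥ (Q1 σ₁ σ₂ F₁ F₂)⁻¹.mulVec
            (Real.sqrt (1 + ε) • g₁)
            = (1 + ε) * (g₁ ⬝ᵥ (Q1 σ₁ σ₂ F₁ F₂)⁻¹.mulVec g₁) := by
          rw [Matrix.mulVec_smul, smul_dotProduct, dotProduct_smul]
          simp only [smul_eq_mul]
          nlinarith [hc2]
        rw [heq]; nlinarith )
  }

end
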